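/- Let M be an L-structure and φ(x;y) ∈ L(M) with r = l(x), s = l(y), t = max{r,s}. If the formula ρ(x₀,x₁,x₂; y₀,y₁,y₂) := (φ(x₀;y₁) ↔ φ(x₀;y₂)) does not have the n-order property in M, then for every finite A ⊆ M with |A| ≥ 2, the number of φ-types over A realized in M satisfies |S_φ(A,M)| ≤ 2n·|A|^k where k = 2^{(3ns)^{t+1}}. -/

import Mathlib

set_option maxHeartbeats 1000000 in
/-- If `ρ(x₀,x₁,x₂;y₀,y₁,y₂) := (φ(x₀;y₁) ↔ φ(x₀;y₂))` does not have the `n`-order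
property in `M`, then for every finite `A ⊆ M` with `|A| ≥ 2`, the number of `φ`-types
over `A` realized in `M` is at most `2n·|A|^k` with `k = 2^{(3ns)^{t+1}}`, `t = max r s`. -/
theorem stmt_14 {M : Type*} (r s n : ℕ)
    (Phi : (Fin r → M) → (Fin s → M) → Prop)
    (hNOP : ¬ ∃ (c : Fin n → (Fin r → M)) (a b : Fin n → (Fin s → M)),
      ∀ i j : Fin n, ((Phi (c i) (a j) ↔ Phi (c i) (b j)) ↔ i < j))
    (A : Finset M) (hA : 2 ≤ A.card) :
    Set.ncard {p : Set (Fin s → M) | ∃ x : Fin r → M,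
      p = {y | (∀ l, y l ∈ A) ∧ Phi x y}} ≤
        2 * n * A.card ^ (2 ^ ((3 * n * s) ^ (max r s + 1))) := by
  classical
  rcases Nat.eq_zero_or_pos n with hn | hn
  · subst hn
    exact absurd ⟨Fin.elim0, Fin.elim0, Fin.elim0, fun i => i.elim0⟩ hNOP
  obtain ⟨a0, ha0⟩ : A.Nonempty := Finset.card_pos.mp (by omega)
  obtain ⟨e, heA⟩ : ∃ e : Fin s → M, ∀ l, e l ∈ A := ⟨fun _ => a0, fun _ => ha0⟩
  obtain ⟨piA, hmem, hmcard⟩ : ∃ piA : Finset (Fin s → M),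
      (∀ y, y ∈ piA ↔ ∀ l, y l ∈ A) ∧ piA.card = A.card ^ s := by
    refine ⟨Fintype.piFinset (fun _ => A), ?_, ?_⟩
    · intro y; simp [Fintype.mem_piFinset]
    · rw [Fintype.card_piFinset]; simp
  have hepiA : e ∈ piA := (hmem e).2 heA
  obtain ⟨G, hGmem⟩ : ∃ G : (Fin r → M) → Finset (Fin s → M),
      ∀ x y, y ∈ G x ↔ (y ∈ piA ∧ (Phi x y ↔ Phi x e)) := by
    refine ⟨fun x => piA.filter (fun y => Phi x y ↔ Phi x e), ?_⟩
    intro x y; simp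
  obtain ⟨𝒢, h𝒢mem⟩ : ∃ 𝒢 : Finset (Finset (Fin s → M)),
      ∀ F, F ∈ 𝒢 ↔ (F ⊆ piA ∧ ∃ x, F = G x) := by
    refine ⟨piA.powerset.filter (fun F => ∃ x, F = G x), ?_⟩
    intro F; simp [Finset.mem_powerset]
  have hG𝒢 : ∀ x, G x ∈ 𝒢 := by
    intro x
    exact (h𝒢mem _).2 ⟨fun y hy => ((hGmem x y).1 hy).1, x, rfl⟩
  have h𝒢piA : ∀ u ∈ 𝒢, u ⊆ piA := fun u hu => ((h𝒢mem u).1 hu).1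
  -- Step 1 : the set of types injects into `Bool × 𝒢`
  obtain ⟨B, hB⟩ : ∃ B : Set (Fin s → M) → Bool, ∀ p, B p = true ↔ e ∈ p := by
    refine ⟨fun p => if e ∈ p then true else false, ?_⟩
    intro p; by_cases h : e ∈ p <;> simp [h]
  obtain ⟨Tr, hTr⟩ : ∃ Tr : Set (Fin s → M) → Finset (Fin s → M),
      ∀ p y, y ∈ Tr p ↔ (y ∈ piA ∧ (y ∈ p ↔ e ∈ p)) := by
    refine ⟨fun p => piA.filter (fun y => y ∈ p ↔ e ∈ p), ?_⟩
    intro p y; simp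
  have h1 : Set.ncard {p : Set (Fin s → M) | ∃ x : Fin r → M,
      p = {y | (∀ l, y l ∈ A) ∧ Phi x y}} ≤ 2 * 𝒢.card := by
    have key := Set.ncard_le_ncard_of_injOn
      (f := fun p : Set (Fin s → M) => (B p, Tr p))
      (s := {p : Set (Fin s → M) | ∃ x : Fin r → M,
        p = {y | (∀ l, y l ∈ A) ∧ Phi x y}})
      (t := ((((Finset.univ : Finset Bool) ×ˢ 𝒢 :
          Finset (Bool × Finset (Fin s → M)))) : Set (Bool × Finset (Fin s → M))))
      ?_ ?_ (Finset.finite_toSet _)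
    · rwa [Set.ncard_coe_finset, Finset.card_product, Finset.card_univ,
        Fintype.card_bool] at key
    · rintro p ⟨x, rfl⟩
      refine Finset.mem_coe.2 (Finset.mem_product.2 ⟨Finset.mem_univ _, ?_⟩)
      refine (h𝒢mem _).2 ⟨fun y hy => ((hTr _ y).1 hy).1, x, ?_⟩
      apply Finset.ext
      intro y
      rw [hTr, hGmem]
      simp only [Set.mem_setOf_eq]
      constructor
      · rintro ⟨hyA, h⟩
        refine ⟨hyA, ?_⟩
        have hyA' := (hmem y).1 hyA
        constructor
        · intro hp; exact (h.1 ⟨hyA', hp⟩).2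
        · intro hp; exact (h.2 ⟨heA, hp⟩).2
      · rintro ⟨hyA, h⟩
        refine ⟨hyA, ?_⟩
        have hyA' := (hmem y).1 hyA
        constructor
        · intro hp; exact ⟨heA, h.1 hp.2⟩
        · intro hp; exact ⟨hyA', h.2 hp.2⟩
    · rintro p ⟨x, rfl⟩ q ⟨x', rfl⟩ hpq
      simp only [Prod.mk.injEq] at hpq
      obtain ⟨h1', h2'⟩ := hpq
      have hee : e ∈ {y | (∀ l, y l ∈ A) ∧ Phi x y} ↔
          e ∈ {y | (∀ l, y l ∈ A) ∧ Phi x' y} := by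
        rw [← hB, ← hB, h1']
      ext y
      by_cases hy : ∀ l, y l ∈ A
      · have hy' : y ∈ piA := (hmem y).2 hy
        have h3 := Finset.ext_iff.1 h2' y
        rw [hTr, hTr] at h3
        simp only [hy', true_and] at h3
        simp only [Set.mem_setOf_eq] at h3 hee ⊢
        tauto
      · simp only [Set.mem_setOf_eq]
        constructor
        · rintro ⟨h, _⟩; exact absurd h hy
        · rintro ⟨h, _⟩; exact absurd h hy
  -- Step 2 : no set of size `n` is shattered by `𝒢`
  have hVC : ∀ b : Finset (Fin s → M), 𝒢.Shatters b → b.card < n := by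
    intro b hb
    by_contra hcon
    push_neg at hcon
    obtain ⟨b', hb'sub, hb'card⟩ := Finset.exists_subset_card_eq hcon
    have hb' : 𝒢.Shatters b' := hb.mono_right hb'sub
    have hb'piA : b' ⊆ piA := by
      obtain ⟨u, hu, hbu⟩ := hb'.exists_superset
      exact hbu.trans (h𝒢piA u hu)
    set v : Fin n → (Fin s → M) :=
      fun j => ((Finset.equivFinOfCardEq hb'card).symm j : Fin s → M) with hv
    have hvmem : ∀ j, v j ∈ b' := fun j => ((Finset.equivFinOfCardEq hb'card).symm j).2
    have hvinj : Function.Injective v := by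
      intro j j' h
      exact (Finset.equivFinOfCardEq hb'card).symm.injective (Subtype.coe_injective h)
    have hwit : ∀ i : Fin n, ∃ x, b' ∩ G x =
        (Finset.univ.filter (fun j : Fin n => i < j)).image v := by
      intro i
      have hsub : (Finset.univ.filter (fun j : Fin n => i < j)).image v ⊆ b' := by
        intro y hy
        obtain ⟨j, _, rfl⟩ := Finset.mem_image.1 hy
        exact hvmem j
      obtain ⟨u, hu, huT⟩ := hb' hsub
      obtain ⟨x, rfl⟩ := ((h𝒢mem u).1 hu).2
      exact ⟨x, huT⟩
    choose c hc using hwit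
    refine hNOP ⟨c, v, fun _ => e, ?_⟩
    intro i j
    have hvj : v j ∈ piA := hb'piA (hvmem j)
    have hmemT : v j ∈ (Finset.univ.filter (fun j' : Fin n => i < j')).image v ↔ i < j := by
      constructor
      · intro h
        obtain ⟨j', hj', hj'eq⟩ := Finset.mem_image.1 h
        rw [hvinj hj'eq] at hj'
        exact (Finset.mem_filter.1 hj').2
      · intro h
        exact Finset.mem_image.2 ⟨j, Finset.mem_filter.2 ⟨Finset.mem_univ _, h⟩, rfl⟩
    rw [← hc i] at hmemT
    rw [Finset.mem_inter, hGmem] at hmemT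
    constructor
    · intro h
      exact hmemT.1 ⟨hvmem j, hvj, h⟩
    · intro h
      exact (hmemT.2 h).2.2
  -- Step 3 : Sauer–Shelah bound on `𝒢`
  have hm1 : 1 ≤ piA.card := Finset.card_pos.mpr ⟨e, hepiA⟩
  have h2 : 𝒢.card ≤ n * piA.card ^ (n - 1) := by
    calc 𝒢.card ≤ 𝒢.shatterer.card := Finset.card_le_card_shatterer 𝒢
      _ ≤ ((Finset.range n).biUnion (fun i => piA.powersetCard i)).card := by
          apply Finset.card_le_card
          intro b hb
          have hbs : 𝒢.Shatters b := Finset.mem_shatterer.1 hb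
          have hbcard : b.card < n := hVC b hbs
          have hbsub : b ⊆ piA := by
            obtain ⟨u, hu, hbu⟩ := hbs.exists_superset
            exact hbu.trans (h𝒢piA u hu)
          exact Finset.mem_biUnion.2 ⟨b.card, Finset.mem_range.2 hbcard,
            Finset.mem_powersetCard.2 ⟨hbsub, rfl⟩⟩
      _ ≤ ∑ i ∈ Finset.range n, (piA.powersetCard i).card :=
          Finset.card_biUnion_le
      _ = ∑ i ∈ Finset.range n, (piA.card).choose i := by
          simp [Finset.card_powersetCard]
      _ ≤ ∑ i ∈ Finset.range n, piA.card ^ i :=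
          Finset.sum_le_sum (fun i _ => Nat.choose_le_pow _ _)
      _ ≤ ∑ _i ∈ Finset.range n, piA.card ^ (n - 1) := by
          apply Finset.sum_le_sum
          intro i hi
          rw [Finset.mem_range] at hi
          exact Nat.pow_le_pow_right hm1 (Nat.le_pred_of_lt hi)
      _ = n * piA.card ^ (n - 1) := by
          rw [Finset.sum_const, Finset.card_range, smul_eq_mul]
  -- Step 4 : arithmetic
  have hexp : s * (n - 1) ≤ 2 ^ ((3 * n * s) ^ (max r s + 1)) := by
    have e1 : s * (n - 1) ≤ 3 * n * s :=
      calc s * (n - 1) ≤ s * n := Nat.mul_le_mul_left s (Nat.sub_le n 1)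
        _ = n * s := Nat.mul_comm s n
        _ ≤ 3 * (n * s) := Nat.le_mul_of_pos_left _ (by norm_num)
        _ = 3 * n * s := (Nat.mul_assoc 3 n s).symm
    have e2 : 3 * n * s ≤ (3 * n * s) ^ (max r s + 1) :=
      Nat.le_self_pow (Nat.succ_ne_zero _) _
    have e3 : (3 * n * s) ^ (max r s + 1) ≤ 2 ^ ((3 * n * s) ^ (max r s + 1)) := by
      exact Nat.lt_two_pow_self.le
    exact e1.trans (e2.trans e3)
  calc Set.ncard {p : Set (Fin s → M) | ∃ x : Fin r → M,
      p = {y | (∀ l, y l ∈ A) ∧ Phi x y}}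
      ≤ 2 * 𝒢.card := h1
    _ ≤ 2 * (n * piA.card ^ (n - 1)) := Nat.mul_le_mul_left 2 h2
    _ = 2 * n * (A.card ^ s) ^ (n - 1) := by rw [hmcard]; ring
    _ = 2 * n * A.card ^ (s * (n - 1)) := by rw [← pow_mul]
    _ ≤ 2 * n * A.card ^ (2 ^ ((3 * n * s) ^ (max r s + 1))) := by
        apply Nat.mul_le_mul_left
        exact Nat.pow_le_pow_right (Nat.le_of_succ_le hA) hexp
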